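/- For every α > 0, the operator norm of K_α − K_∞ equals 2/α, where K_∞ is the diagonal operator on ℓ²(ℕ₊, ℂ) given by (K_∞ u)(n) = u(n)/n. -/

import Mathlib

open scoped BigOperators

/-- The Hardy kernel `k_α(n,m) = (nm)^(-1/2+α) / max(n,m)^(2α)` on the positive integers. -/
noncomputable def kmat (α : ℝ) (n m : ℕ+) : ℝ :=
  ((n : ℝ) * (m : ℝ)) ^ (-(1/2 : ℝ) + α) / (max (n : ℝ) (m : ℝ)) ^ (2 * α)

/-- `K` realises the matrix `(k_α(n,m))` as a bounded operator on `ℓ²(ℕ₊, ℂ)`. -/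
def IsKop (α : ℝ) (K : lp (fun _ : ℕ+ => ℂ) 2 →L[ℂ] lp (fun _ : ℕ+ => ℂ) 2) : Prop :=
  ∀ u : lp (fun _ : ℕ+ => ℂ) 2, ∀ n : ℕ+, K u n = ∑' m : ℕ+, (kmat α n m : ℂ) * u m

open scoped ENNReal NNReal ComplexConjugate
open Finset

namespace HardyAux
variable {α : ℝ}

lemma pnat_cast_pos (n : ℕ+) : (0:ℝ) < (n:ℝ) := by exact_mod_cast n.pos
lemma pnat_one_le (n : ℕ+) : (1:ℝ) ≤ (n:ℝ) := by exact_mod_cast n.one_le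

lemma kmat_nonneg (α : ℝ) (n m : ℕ+) : 0 ≤ kmat α n m := by
  unfold kmat; positivity

lemma kmat_of_le (α : ℝ) {n m : ℕ+} (h : m ≤ n) :
    kmat α n m = (m:ℝ)^(α - 1/2) * (n:ℝ)^(-(α + 1/2)) := by
  have hn := pnat_cast_pos n
  have hm := pnat_cast_pos m
  have hmax : max (n:ℝ) (m:ℝ) = (n:ℝ) := max_eq_left (by exact_mod_cast h)
  rw [kmat, hmax, Real.mul_rpow hn.le hm.le, mul_comm, mul_div_assoc,
    ← Real.rpow_sub hn]
  rw [show (-(1/2:ℝ) + α) = α - 1/2 by ring, show α - 1/2 - 2*α = -(α+1/2) by ring]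

lemma kmat_symm (α : ℝ) (n m : ℕ+) : kmat α n m = kmat α m n := by
  rw [kmat, kmat, mul_comm, max_comm]

lemma kmat_diag (α : ℝ) (n : ℕ+) : kmat α n n = (n:ℝ)⁻¹ := by
  rw [kmat_of_le α le_rfl, ← Real.rpow_add (pnat_cast_pos n),
    show α - 1/2 + -(α + 1/2) = -1 by ring, Real.rpow_neg_one]

lemma kmat_le (α : ℝ) (hα : 0 < α) (n m : ℕ+) :
    kmat α n m ≤ (n:ℝ)^(α - 1/2) * (m:ℝ)^(-(α + 1/2)) := by
  have hn := pnat_cast_pos n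
  have hm := pnat_cast_pos m
  rcases le_total n m with h | h
  · rw [kmat_symm, kmat_of_le α h]
  · rw [kmat_of_le α h]
    have h2 : (m:ℝ)^(2*α) ≤ (n:ℝ)^(2*α) :=
      Real.rpow_le_rpow hm.le (by exact_mod_cast h) (by positivity)
    have e1 : (m:ℝ)^(α - 1/2) * (n:ℝ)^(-(α + 1/2))
        = (m:ℝ)^(2*α) * ((m:ℝ)^(-(α+1/2)) * (n:ℝ)^(-(α+1/2))) := by
      rw [← mul_assoc, ← Real.rpow_add hm]; ring_nf
    have e2 : (n:ℝ)^(α - 1/2) * (m:ℝ)^(-(α + 1/2))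
        = (n:ℝ)^(2*α) * ((m:ℝ)^(-(α+1/2)) * (n:ℝ)^(-(α+1/2))) := by
      rw [mul_comm ((m:ℝ)^(-(α+1/2))) _, ← mul_assoc, ← Real.rpow_add hn]; ring_nf
    rw [e1, e2]
    exact mul_le_mul_of_nonneg_right h2 (by positivity)


lemma integ_rpow (a b : ℝ) (r : ℝ) (h : -1 < r) :
    ∫ x in a..b, x ^ r = (b ^ (r+1) - a ^ (r+1)) / (r+1) :=
  integral_rpow (Or.inl h)

lemma rpow_anti (hle : α ≤ 1) {x y : ℝ} (hx : 0 < x) (hxy : x ≤ y) :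
    y ^ (α-1) ≤ x ^ (α-1) :=
  Real.rpow_le_rpow_of_nonpos hx hxy (by linarith)

lemma sum_rpow_le (hα : 0 < α) (i : ℕ) :
    ∑ j ∈ range i, ((j:ℝ)+1) ^ (α-1) ≤ ((i:ℝ)+1) ^ α / α := by
  rcases le_total α 1 with hle | hge
  · rcases Nat.eq_zero_or_pos i with rfl | hi
    · simp; positivity
    obtain ⟨k, rfl⟩ : ∃ k, i = k + 1 := ⟨i - 1, by omega⟩
    have hanti : AntitoneOn (fun x : ℝ => x ^ (α-1)) (Set.Icc (1:ℝ) (1 + (k:ℕ))) := by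
      intro x hx y hy hxy
      exact rpow_anti hle (by linarith [hx.1]) hxy
    have h1 := hanti.sum_le_integral (x₀ := 1) (a := k)
    rw [integ_rpow _ _ _ (by linarith), show α - 1 + 1 = α by ring, Real.one_rpow] at h1
    rw [Finset.sum_range_succ']
    have h2 : ∑ j ∈ range k, (((j:ℕ):ℝ)+1+1) ^ (α-1) ≤ ((1+(k:ℝ)) ^ α - 1) / α := by
      refine le_trans (le_of_eq ?_) h1
      refine Finset.sum_congr rfl fun j _ => ?_
      norm_num; ring_nf
    have hmono2 : ((1:ℝ)+(k:ℝ)) ^ α ≤ ((k:ℝ)+1+1) ^ α :=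
      Real.rpow_le_rpow (by positivity) (by linarith) hα.le
    have h3 : (((0:ℕ):ℝ)+1) ^ (α-1) = 1 := by norm_num
    push_cast
    push_cast at h2 h3
    rw [h3]
    calc ∑ j ∈ range k, ((j:ℝ)+1+1) ^ (α-1) + 1
        ≤ ((1+(k:ℝ)) ^ α - 1) / α + α/α := by rw [div_self hα.ne']; linarith
      _ = ((1+(k:ℝ)) ^ α - 1 + α) / α := by ring
      _ ≤ ((k:ℝ)+1+1) ^ α / α := by gcongr; linarith
  · have hmono : MonotoneOn (fun x : ℝ => x ^ (α-1)) (Set.Icc (1:ℝ) (1 + (i:ℕ))) := by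
      intro x hx y hy hxy
      exact Real.rpow_le_rpow (by linarith [hx.1]) hxy (by linarith)
    have h1 := hmono.sum_le_integral (x₀ := 1) (a := i)
    rw [integ_rpow _ _ _ (by linarith), show α - 1 + 1 = α by ring, Real.one_rpow] at h1
    have h2 : ∑ j ∈ range i, ((j:ℝ)+1) ^ (α-1) ≤ ((1+(i:ℝ)) ^ α - 1) / α := by
      refine le_trans (le_of_eq ?_) h1
      exact Finset.sum_congr rfl fun j _ => by rw [add_comm]
    calc ∑ j ∈ range i, ((j:ℝ)+1) ^ (α-1) ≤ ((1+(i:ℝ)) ^ α - 1)/α := h2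
      _ ≤ ((i:ℝ)+1) ^ α / α := by rw [add_comm (1:ℝ) (i:ℝ)]; gcongr; linarith

lemma le_sum_rpow (hα : 0 < α) (i : ℕ) :
    ((i:ℝ)+1) ^ α / α - 1/α - ((i:ℝ)+1) ^ (α-1) ≤ ∑ j ∈ range i, ((j:ℝ)+1) ^ (α-1) := by
  rcases le_total α 1 with hle | hge
  · have hanti : AntitoneOn (fun x : ℝ => x ^ (α-1)) (Set.Icc (1:ℝ) (1 + (i:ℕ))) := by
      intro x hx y hy hxy
      exact rpow_anti hle (by linarith [hx.1]) hxy
    have h1 := hanti.integral_le_sum (x₀ := 1) (a := i)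
    rw [integ_rpow _ _ _ (by linarith), show α - 1 + 1 = α by ring, Real.one_rpow] at h1
    have h2 : ((1+(i:ℝ)) ^ α - 1) / α ≤ ∑ j ∈ range i, ((j:ℝ)+1) ^ (α-1) := by
      refine h1.trans (le_of_eq ?_)
      exact Finset.sum_congr rfl fun j _ => by rw [add_comm]
    have hpos : (0:ℝ) ≤ ((i:ℝ)+1) ^ (α-1) := by positivity
    rw [add_comm (1:ℝ) (i:ℝ)] at h2
    calc ((i:ℝ)+1) ^ α / α - 1/α - ((i:ℝ)+1) ^ (α-1)
        ≤ ((i:ℝ)+1) ^ α / α - 1/α := by linarith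
      _ = (((i:ℝ)+1) ^ α - 1)/α := by ring
      _ ≤ _ := h2
  · have hmono : MonotoneOn (fun x : ℝ => x ^ (α-1)) (Set.Icc (0:ℝ) (0 + ((i+1:ℕ)))) := by
      intro x hx y hy hxy
      exact Real.rpow_le_rpow hx.1 hxy (by linarith)
    have h1 := hmono.integral_le_sum (x₀ := 0) (a := i+1)
    rw [integ_rpow _ _ _ (by linarith), show α - 1 + 1 = α by ring] at h1
    have hz : (0:ℝ) ^ α = 0 := Real.zero_rpow hα.ne'
    rw [hz] at h1
    simp only [zero_add] at h1
    push_cast at h1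
    rw [Finset.sum_range_succ, sub_zero] at h1
    have hp : (0:ℝ) ≤ 1/α := by positivity
    linarith


lemma integ_rpow' (a b : ℝ) (r : ℝ) (h : r ≠ -1) (h2 : (0:ℝ) ∉ Set.uIcc a b) :
    ∫ x in a..b, x ^ r = (b ^ (r+1) - a ^ (r+1)) / (r+1) :=
  integral_rpow (Or.inr ⟨h, h2⟩)

lemma tail_sum_le (hα : 0 < α) (c : ℕ) (hc : 1 ≤ c) :
    ∑' j : ℕ, ((c:ℝ)+1+(j:ℝ)) ^ (-(α+1)) ≤ (c:ℝ) ^ (-α) / α := by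
  have hcpos : (0:ℝ) < c := by exact_mod_cast hc
  apply Real.tsum_le_of_sum_range_le (fun j => by positivity)
  intro J
  have hanti : AntitoneOn (fun x : ℝ => x ^ (-(α+1))) (Set.Icc (c:ℝ) ((c:ℝ) + (J:ℕ))) := by
    intro x hx y hy hxy
    exact Real.rpow_le_rpow_of_nonpos (lt_of_lt_of_le hcpos hx.1) hxy (by linarith)
  have h1 := hanti.sum_le_integral (x₀ := (c:ℝ)) (a := J)
  have h2 : ∫ x in (c:ℝ)..((c:ℝ)+(J:ℕ)), x ^ (-(α+1))
      = (((c:ℝ)+(J:ℕ)) ^ (-α) - (c:ℝ) ^ (-α)) / (-α) := by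
    rw [integ_rpow' _ _ _ (by intro h; linarith [hα]) ?_, show -(α+1)+1 = -α by ring]
    · intro h
      rw [Set.mem_uIcc] at h
      rcases h with h | h
      · linarith [h.1]
      · push_cast at h; linarith [h.1]
  rw [h2] at h1
  have h3 : ∑ j ∈ range J, ((c:ℝ)+1+(j:ℝ)) ^ (-(α+1))
      = ∑ j ∈ range J, ((c:ℝ)+((j:ℕ)+1:ℕ)) ^ (-(α+1)) := by
    refine Finset.sum_congr rfl fun j _ => ?_
    push_cast; ring_nf
  rw [h3]
  refine h1.trans ?_
  have h4 : (0:ℝ) ≤ ((c:ℝ)+(J:ℕ)) ^ (-α) := by positivity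
  have h5 : (((c:ℝ)+(J:ℕ)) ^ (-α) - (c:ℝ) ^ (-α)) / (-α)
      = ((c:ℝ) ^ (-α) - ((c:ℝ)+(J:ℕ)) ^ (-α)) / α := by
    rw [div_eq_div_iff (by intro h; linarith : -α ≠ 0) hα.ne']; ring
  rw [h5]
  gcongr
  linarith

lemma summable_shift (f : ℕ → ℝ) (p : ℝ) (hp : p < -1) (C : ℝ)
    (hf : ∀ j : ℕ, 0 ≤ f j) (hle : ∀ j : ℕ, f j ≤ C * ((j:ℝ)+1) ^ p) : Summable f := by
  have hs : Summable (fun j : ℕ => C * ((j:ℝ)+1) ^ p) := by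
    apply Summable.mul_left
    have := (summable_nat_add_iff (f := fun n : ℕ => (n:ℝ) ^ p) 1).2
      (Real.summable_nat_rpow.2 hp)
    refine this.congr fun j => ?_
    push_cast; ring_nf
  exact Summable.of_nonneg_of_le hf hle hs

lemma summable_rpow_shift (p : ℝ) (hp : p < -1) :
    Summable (fun j : ℕ => ((j:ℝ)+1) ^ p) :=
  summable_shift _ p hp 1 (fun j => by positivity) (fun j => by rw [one_mul])

-- transfer between ℕ+ and ℕ
lemma pnat_tsum (f : ℕ+ → ℝ) : ∑' m : ℕ+, f m = ∑' j : ℕ, f (j.succPNat) :=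
  (Equiv.pnatEquivNat.symm.tsum_eq f).symm

lemma pnat_summable {f : ℕ+ → ℝ} (h : Summable fun j : ℕ => f j.succPNat) :
    Summable f := by
  have := Equiv.pnatEquivNat.symm.summable_iff (f := f)
  exact this.1 (by exact h)

lemma succPNat_cast (j : ℕ) : ((j.succPNat : ℕ+) : ℝ) = (j:ℝ) + 1 := by
  have : ((j.succPNat : ℕ+) : ℕ) = j + 1 := rfl
  rw [this]; push_cast; ring


/-- off-diagonal kernel -/
noncomputable def ker (α : ℝ) (n m : ℕ+) : ℝ := if m = n then 0 else kmat α n m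

lemma ker_nonneg (α : ℝ) (n m : ℕ+) : 0 ≤ ker α n m := by
  unfold ker; split
  · exact le_rfl
  · exact kmat_nonneg α n m

lemma ker_le_kmat (α : ℝ) (n m : ℕ+) : ker α n m ≤ kmat α n m := by
  unfold ker; split
  · exact kmat_nonneg α n m
  · exact le_rfl

lemma ker_symm (α : ℝ) (n m : ℕ+) : ker α n m = ker α m n := by
  unfold ker
  rcases eq_or_ne m n with rfl | h
  · simp
  · rw [if_neg h, if_neg (Ne.symm h), kmat_symm]

lemma ker_lt (hα : 0 < α) {n m : ℕ+} (h : m < n) :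
    ker α n m = (m:ℝ)^(α - 1/2) * (n:ℝ)^(-(α + 1/2)) := by
  rw [ker, if_neg (ne_of_lt h), kmat_of_le α h.le]

lemma ker_gt (hα : 0 < α) {n m : ℕ+} (h : n < m) :
    ker α n m = (n:ℝ)^(α - 1/2) * (m:ℝ)^(-(α + 1/2)) := by
  rw [ker_symm, ker, if_neg (ne_of_lt h), kmat_of_le α h.le, mul_comm]

/-- summability of a row of `ker` against a power weight -/
lemma summable_row (hα : 0 < α) (n : ℕ+) {g : ℕ+ → ℝ} (hg0 : ∀ m, 0 ≤ g m)
    (hg : ∀ m : ℕ+, g m ≤ (m:ℝ) ^ (-(1/2):ℝ)) :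
    Summable (fun m : ℕ+ => kmat α n m * g m) := by
  apply pnat_summable
  apply summable_shift _ (-(α+1)) (by linarith) ((n:ℝ)^(α - 1/2))
  · intro j; exact mul_nonneg (kmat_nonneg _ _ _) (hg0 _)
  · intro j
    set m : ℕ+ := j.succPNat
    have hm : ((m:ℕ+):ℝ) = (j:ℝ)+1 := succPNat_cast j
    have h1 : kmat α n m * g m ≤ ((n:ℝ)^(α - 1/2) * (m:ℝ)^(-(α+1/2))) * (m:ℝ)^(-(1/2):ℝ) := by
      apply mul_le_mul (kmat_le α hα n m) (hg m) (hg0 m) (by positivity)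
    refine h1.trans (le_of_eq ?_)
    rw [mul_assoc, ← Real.rpow_add (pnat_cast_pos m), hm,
      show -(α+1/2) + -(1/2:ℝ) = -(α+1) by ring]

/-- The key row bound. -/
lemma row_bound (hα : 0 < α) (n : ℕ+) :
    ∑' m : ℕ+, ker α n m * (m:ℝ) ^ (-(1/2):ℝ) ≤ (2/α) * (n:ℝ) ^ (-(1/2):ℝ) := by
  set i : ℕ := n.natPred with hi
  have hni : ((n:ℕ+):ℝ) = (i:ℝ) + 1 := by
    rw [hi, ← succPNat_cast n.natPred, PNat.succPNat_natPred]
  have hsum : Summable (fun m : ℕ+ => ker α n m * (m:ℝ) ^ (-(1/2):ℝ)) := by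
    apply Summable.of_nonneg_of_le
      (fun m => mul_nonneg (ker_nonneg _ _ _) (by positivity))
      (fun m => mul_le_mul_of_nonneg_right (ker_le_kmat α n m) (by positivity))
    exact summable_row hα n (fun m => by positivity) (fun m => le_rfl)
  rw [pnat_tsum]
  have hsum' : Summable (fun j : ℕ => ker α n j.succPNat * ((j.succPNat:ℕ+):ℝ) ^ (-(1/2):ℝ)) := by
    have := hsum; rwa [← Equiv.pnatEquivNat.symm.summable_iff] at this
  rw [← hsum'.sum_add_tsum_nat_add (i+1)]
  -- head part
  have head : ∑ j ∈ range (i+1), ker α n j.succPNat * ((j.succPNat:ℕ+):ℝ) ^ (-(1/2):ℝ)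
      ≤ (1/α) * (n:ℝ) ^ (-(1/2):ℝ) := by
    rw [Finset.sum_range_succ]
    have hlast : ker α n i.succPNat = 0 := by
      rw [ker, if_pos (PNat.succPNat_natPred n)]
    rw [hlast, zero_mul, add_zero]
    have hterm : ∀ j ∈ range i, ker α n j.succPNat * ((j.succPNat:ℕ+):ℝ) ^ (-(1/2):ℝ)
        = ((j:ℝ)+1) ^ (α-1) * (n:ℝ) ^ (-(α+1/2)) := by
      intro j hj
      have hjlt : (j.succPNat : ℕ+) < n := by
        rw [← PNat.succPNat_natPred n]
        exact Nat.succPNat_lt_succPNat.2 (Finset.mem_range.1 hj)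
      rw [ker_lt hα hjlt, mul_assoc, mul_comm ((n:ℝ)^(-(α+1/2))) _, ← mul_assoc,
        ← Real.rpow_add (pnat_cast_pos _), succPNat_cast,
        show α - 1/2 + -(1/2:ℝ) = α - 1 by ring]
    rw [Finset.sum_congr rfl hterm, ← Finset.sum_mul]
    have hle := sum_rpow_le hα i
    rw [← hni] at hle
    have hnn : (0:ℝ) ≤ (n:ℝ) ^ (-(α+1/2)) := by positivity
    refine (mul_le_mul_of_nonneg_right hle hnn).trans (le_of_eq ?_)
    rw [div_mul_eq_mul_div, mul_comm ((n:ℝ)^α) _, ← Real.rpow_add (pnat_cast_pos n),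
      show -(α+1/2) + α = -(1/2:ℝ) by ring]
    ring
  have tail : ∑' j : ℕ, ker α n (j+(i+1)).succPNat * (((j+(i+1)).succPNat:ℕ+):ℝ) ^ (-(1/2):ℝ)
      ≤ (1/α) * (n:ℝ) ^ (-(1/2):ℝ) := by
    have hterm : ∀ j : ℕ, ker α n (j+(i+1)).succPNat * (((j+(i+1)).succPNat:ℕ+):ℝ) ^ (-(1/2):ℝ)
        = (n:ℝ) ^ (α-1/2) * (((i:ℝ)+1)+1+(j:ℝ)) ^ (-(α+1)) := by
      intro j
      have hjgt : n < ((j+(i+1)).succPNat : ℕ+) := by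
        rw [← PNat.succPNat_natPred n]
        exact Nat.succPNat_lt_succPNat.2 (by omega)
      rw [ker_gt hα hjgt, mul_assoc, ← Real.rpow_add (pnat_cast_pos _), succPNat_cast,
        show -(α+1/2) + -(1/2:ℝ) = -(α+1) by ring]
      congr 2
      push_cast; ring
    rw [tsum_congr hterm, tsum_mul_left]
    have hle := tail_sum_le hα (i+1) (by omega)
    have h2 : (((i+1:ℕ)):ℝ) = (i:ℝ)+1 := by push_cast; ring
    rw [h2] at hle
    have hnn : (0:ℝ) ≤ (n:ℝ) ^ (α-1/2) := by positivity
    refine (mul_le_mul_of_nonneg_left hle hnn).trans (le_of_eq ?_)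
    rw [← hni, mul_div_assoc', ← Real.rpow_add (pnat_cast_pos n),
      show α - 1/2 + -α = -(1/2:ℝ) by ring]
    ring
  calc _ ≤ (1/α) * (n:ℝ) ^ (-(1/2):ℝ) + (1/α) * (n:ℝ) ^ (-(1/2):ℝ) := add_le_add head tail
    _ = (2/α) * (n:ℝ) ^ (-(1/2):ℝ) := by ring



lemma enn_two_mul_le (a b : ℝ≥0∞) : 2 * (a * b) ≤ a^2 + b^2 := by
  rcases eq_or_ne a ⊤ with rfl | ha
  · rcases eq_or_ne b 0 with rfl | hb
    · simp
    · have : (⊤:ℝ≥0∞)^2 = ⊤ := by simp [pow_two]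
      rw [this]; exact le_top.trans_eq (top_add _).symm
  rcases eq_or_ne b ⊤ with rfl | hb
  · have : (⊤:ℝ≥0∞)^2 = ⊤ := by simp [pow_two]
    rw [this]; exact le_top.trans_eq (add_top _).symm
  lift a to ℝ≥0 using ha
  lift b to ℝ≥0 using hb
  rw [← ENNReal.coe_mul, ← ENNReal.coe_pow, ← ENNReal.coe_pow,
      show ((2:ℝ≥0∞)) = ((2:ℝ≥0):ℝ≥0∞) by norm_cast, ← ENNReal.coe_mul, ← ENNReal.coe_add,
      ENNReal.coe_le_coe, ← NNReal.coe_le_coe]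
  push_cast
  nlinarith [sq_nonneg ((a:ℝ) - (b:ℝ))]

lemma enn_amgm {c : ℝ} (hc : 0 < c) (u v : ℝ≥0∞) :
    2 * (u * v) ≤ ENNReal.ofReal c * u^2 + ENNReal.ofReal c⁻¹ * v^2 := by
  have hs : (0:ℝ) < Real.sqrt c := Real.sqrt_pos.2 hc
  have key := enn_two_mul_le (ENNReal.ofReal (Real.sqrt c) * u)
    (ENNReal.ofReal (Real.sqrt c)⁻¹ * v)
  have e1 : (ENNReal.ofReal (Real.sqrt c) * u) * (ENNReal.ofReal (Real.sqrt c)⁻¹ * v)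
      = u * v := by
    rw [mul_mul_mul_comm, ← ENNReal.ofReal_mul hs.le, mul_inv_cancel₀ hs.ne',
      ENNReal.ofReal_one, one_mul]
  have e2 : (ENNReal.ofReal (Real.sqrt c) * u)^2 = ENNReal.ofReal c * u^2 := by
    rw [mul_pow, ← ENNReal.ofReal_pow hs.le, Real.sq_sqrt hc.le]
  have e3 : (ENNReal.ofReal (Real.sqrt c)⁻¹ * v)^2 = ENNReal.ofReal c⁻¹ * v^2 := by
    rw [mul_pow, ← ENNReal.ofReal_pow (by positivity), ← Real.sqrt_inv,
      Real.sq_sqrt (by positivity)]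
  rw [e1, e2, e3] at key
  exact key

/-- Schur test in `ℝ≥0∞`. -/
lemma schur {ι : Type*} (A : ι → ι → ℝ≥0∞) (w : ι → ℝ) (C : ℝ≥0∞)
    (hw : ∀ n, 0 < w n) (hsym : ∀ n m, A n m = A m n)
    (hrow : ∀ n, ∑' m, A n m * ENNReal.ofReal (w m) ≤ C * ENNReal.ofReal (w n))
    (U : ι → ℝ≥0∞) :
    ∑' n, (∑' m, A n m * U m)^2 ≤ C^2 * ∑' m, (U m)^2 := by
  -- T1 bound
  have hT1 : ∑' n, ∑' m, ∑' k,
      A n m * A n k * (ENNReal.ofReal (w k / w m) * (U m)^2)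
      ≤ C^2 * ∑' m, (U m)^2 := by
    have step1 : ∀ n m, ∑' k, A n m * A n k * (ENNReal.ofReal (w k / w m) * (U m)^2)
        ≤ (A n m * ENNReal.ofReal (w m)⁻¹ * (U m)^2) * (C * ENNReal.ofReal (w n)) := by
      intro n m
      have e : ∀ k, A n m * A n k * (ENNReal.ofReal (w k / w m) * (U m)^2)
          = (A n m * ENNReal.ofReal (w m)⁻¹ * (U m)^2) * (A n k * ENNReal.ofReal (w k)) := by
        intro k
        rw [div_eq_mul_inv, ENNReal.ofReal_mul (hw k).le]
        ring
      rw [tsum_congr e, ENNReal.tsum_mul_left]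
      exact mul_le_mul_right (hrow n) _
    calc ∑' n, ∑' m, ∑' k, A n m * A n k * (ENNReal.ofReal (w k / w m) * (U m)^2)
        ≤ ∑' n, ∑' m, (A n m * ENNReal.ofReal (w m)⁻¹ * (U m)^2) * (C * ENNReal.ofReal (w n)) :=
          ENNReal.tsum_le_tsum fun n => ENNReal.tsum_le_tsum fun m => step1 n m
      _ = ∑' m, ∑' n, (A n m * ENNReal.ofReal (w m)⁻¹ * (U m)^2) * (C * ENNReal.ofReal (w n)) :=
          ENNReal.tsum_comm
      _ = ∑' m, (ENNReal.ofReal (w m)⁻¹ * (U m)^2 * C) * (∑' n, A m n * ENNReal.ofReal (w n)) := by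
          refine tsum_congr fun m => ?_
          rw [← ENNReal.tsum_mul_left]
          refine tsum_congr fun n => ?_
          rw [hsym n m]; ring
      _ ≤ ∑' m, (ENNReal.ofReal (w m)⁻¹ * (U m)^2 * C) * (C * ENNReal.ofReal (w m)) :=
          ENNReal.tsum_le_tsum fun m => mul_le_mul_right (hrow m) _
      _ = ∑' m, C^2 * ((ENNReal.ofReal (w m)⁻¹ * ENNReal.ofReal (w m)) * (U m)^2) := by
          refine tsum_congr fun m => by ring
      _ = C^2 * ∑' m, (U m)^2 := by
          rw [ENNReal.tsum_mul_left]
          congr 1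
          refine tsum_congr fun m => ?_
          rw [← ENNReal.ofReal_mul (inv_nonneg.2 (hw m).le), inv_mul_cancel₀ (hw m).ne',
            ENNReal.ofReal_one, one_mul]
  -- assemble
  have expand : ∀ n, (∑' m, A n m * U m)^2
      = ∑' m, ∑' k, (A n m * U m) * (A n k * U k) := by
    intro n
    rw [pow_two, ← ENNReal.tsum_mul_right]
    exact tsum_congr fun m => (ENNReal.tsum_mul_left).symm
  have key : ∀ n m k, 2 * ((A n m * U m) * (A n k * U k))
      ≤ A n m * A n k * (ENNReal.ofReal (w k / w m) * (U m)^2)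
        + A n m * A n k * (ENNReal.ofReal (w m / w k) * (U k)^2) := by
    intro n m k
    have hc : 0 < w k / w m := div_pos (hw k) (hw m)
    have h := enn_amgm hc (U m) (U k)
    have hinv : (w k / w m)⁻¹ = w m / w k := by field_simp
    rw [hinv] at h
    calc 2 * ((A n m * U m) * (A n k * U k))
        = A n m * A n k * (2 * (U m * U k)) := by ring
      _ ≤ A n m * A n k * (ENNReal.ofReal (w k / w m) * (U m)^2
            + ENNReal.ofReal (w m / w k) * (U k)^2) := mul_le_mul_right h _
      _ = _ := by ring
  have two_ne_top : (2:ℝ≥0∞) ≠ ⊤ := by norm_num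
  rw [← ENNReal.mul_le_mul_iff_right (a := 2) (by norm_num) two_ne_top]
  calc 2 * ∑' n, (∑' m, A n m * U m)^2
      = ∑' n, ∑' m, ∑' k, 2 * ((A n m * U m) * (A n k * U k)) := by
        rw [← ENNReal.tsum_mul_left]
        refine tsum_congr fun n => ?_
        rw [expand n, ← ENNReal.tsum_mul_left]
        refine tsum_congr fun m => ?_
        rw [← ENNReal.tsum_mul_left]
    _ ≤ ∑' n, ∑' m, ∑' k, (A n m * A n k * (ENNReal.ofReal (w k / w m) * (U m)^2)
          + A n m * A n k * (ENNReal.ofReal (w m / w k) * (U k)^2)) := by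
        refine ENNReal.tsum_le_tsum fun n => ENNReal.tsum_le_tsum fun m =>
          ENNReal.tsum_le_tsum fun k => key n m k
    _ = ∑' n, ∑' m, ∑' k, A n m * A n k * (ENNReal.ofReal (w k / w m) * (U m)^2)
        + ∑' n, ∑' m, ∑' k, A n m * A n k * (ENNReal.ofReal (w m / w k) * (U k)^2) := by
        rw [← ENNReal.tsum_add]
        refine tsum_congr fun n => ?_
        rw [← ENNReal.tsum_add]
        refine tsum_congr fun m => ?_
        rw [← ENNReal.tsum_add]
    _ = ∑' n, ∑' m, ∑' k, A n m * A n k * (ENNReal.ofReal (w k / w m) * (U m)^2)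
        + ∑' n, ∑' m, ∑' k, A n m * A n k * (ENNReal.ofReal (w k / w m) * (U m)^2) := by
        congr 1
        refine tsum_congr fun n => ?_
        rw [ENNReal.tsum_comm]
        refine tsum_congr fun m => tsum_congr fun k => by ring
    _ ≤ 2 * (C^2 * ∑' m, (U m)^2) := by
        rw [two_mul]
        exact add_le_add hT1 hT1



/-- summability of the kernel row against an ℓ² function -/
lemma summable_kmat_mul (hα : 0 < α) (n : ℕ+) (u : lp (fun _ : ℕ+ => ℂ) 2) :
    Summable (fun m : ℕ+ => kmat α n m * ‖u m‖) := by
  have hu : Summable (fun m : ℕ+ => ‖u m‖ ^ (2:ℝ)) := by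
    have := lp.memℓp u
    rw [memℓp_gen_iff (by norm_num : 0 < (2:ℝ≥0∞).toReal)] at this
    simpa using this
  have hk2 : Summable (fun m : ℕ+ => (kmat α n m)^2) := by
    apply pnat_summable
    apply summable_shift _ (-(2*α+1)) (by linarith) (((n:ℝ)^(α-1/2))^2)
    · intro j; positivity
    · intro j
      set m : ℕ+ := j.succPNat
      have h1 : (kmat α n m)^2 ≤ ((n:ℝ)^(α-1/2) * (m:ℝ)^(-(α+1/2)))^2 := by
        apply pow_le_pow_left₀ (kmat_nonneg α n m) (kmat_le α hα n m)
      refine h1.trans (le_of_eq ?_)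
      rw [mul_pow, ← Real.rpow_natCast ((m:ℝ)^(-(α+1/2))) 2, ← Real.rpow_mul (pnat_cast_pos m).le,
        succPNat_cast]
      norm_num
      ring_nf
      exact Or.inl trivial
  have hu2 : Summable (fun m : ℕ+ => ‖u m‖^2) := by
    refine hu.congr fun m => ?_
    rw [← Real.rpow_natCast ‖u m‖ 2]; norm_num
  apply Summable.of_nonneg_of_le
    (fun m => mul_nonneg (kmat_nonneg α n m) (norm_nonneg _))
    (fun m => ?_) ((hk2.add hu2).mul_left (1/2 : ℝ))
  have := two_mul_le_add_sq (kmat α n m) ‖u m‖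
  calc kmat α n m * ‖u m‖ = 1/2 * (2 * (kmat α n m * ‖u m‖)) := by ring
    _ ≤ 1/2 * ((kmat α n m)^2 + ‖u m‖^2) := by
        refine mul_le_mul_of_nonneg_left ?_ (by norm_num)
        nlinarith [two_mul_le_add_sq (kmat α n m) ‖u m‖]

lemma summable_kmat_mul_c (hα : 0 < α) (n : ℕ+) (u : lp (fun _ : ℕ+ => ℂ) 2) :
    Summable (fun m : ℕ+ => (kmat α n m : ℂ) * u m) := by
  apply Summable.of_norm
  refine (summable_kmat_mul hα n u).congr fun m => ?_
  rw [norm_mul, Complex.norm_real, Real.norm_of_nonneg (kmat_nonneg α n m)]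

/-- the coordinates of `(K - Kinf) u` -/
lemma sub_apply (hα : 0 < α) (K Kinf : lp (fun _ : ℕ+ => ℂ) 2 →L[ℂ] lp (fun _ : ℕ+ => ℂ) 2)
    (hK : IsKop α K) (hKinf : ∀ u : lp (fun _ : ℕ+ => ℂ) 2, ∀ n : ℕ+,
      Kinf u n = u n / (n : ℂ))
    (u : lp (fun _ : ℕ+ => ℂ) 2) (n : ℕ+) :
    (K - Kinf) u n = ∑' m : ℕ+, (ker α n m : ℂ) * u m := by
  have h1 : (K - Kinf) u n = K u n - Kinf u n := by
    rw [ContinuousLinearMap.sub_apply]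
    exact congrFun (lp.coeFn_sub (K u) (Kinf u)) n
  rw [h1, hK u n, hKinf u n]
  have h2 := (summable_kmat_mul_c hα n u).tsum_eq_add_tsum_ite n
  have h3 : u n / (n:ℂ) = (kmat α n n : ℂ) * u n := by
    rw [kmat_diag]
    push_cast
    rw [div_eq_inv_mul]
  rw [h3, h2]
  rw [add_sub_cancel_left]
  refine tsum_congr fun m => ?_
  rw [ker]
  split
  · simp
  · rfl



lemma tsum_sq_ofReal_norm (f : lp (fun _ : ℕ+ => ℂ) 2) :
    ∑' n : ℕ+, (ENNReal.ofReal ‖f n‖)^2 = ENNReal.ofReal (‖f‖^2) := by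
  have hp : (0:ℝ) < (2:ℝ≥0∞).toReal := by norm_num
  have h1 : ‖f‖ ^ (2:ℝ≥0∞).toReal = ∑' n : ℕ+, ‖f n‖ ^ (2:ℝ≥0∞).toReal :=
    lp.norm_rpow_eq_tsum hp f
  have hs : Summable (fun n : ℕ+ => ‖f n‖ ^ (2:ℝ≥0∞).toReal) := by
    have := lp.memℓp f
    rwa [memℓp_gen_iff hp] at this
  rw [show ((2:ℝ≥0∞).toReal) = (2:ℝ) by norm_num] at h1 hs
  have h2 : ENNReal.ofReal (∑' n : ℕ+, ‖f n‖ ^ (2:ℝ))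
      = ∑' n : ℕ+, ENNReal.ofReal (‖f n‖ ^ (2:ℝ)) :=
    ENNReal.ofReal_tsum_of_nonneg (fun n => by positivity) hs
  have h3 : ∀ n : ℕ+, ENNReal.ofReal (‖f n‖ ^ (2:ℝ)) = (ENNReal.ofReal ‖f n‖)^2 := by
    intro n
    rw [show ‖f n‖ ^ (2:ℝ) = ‖f n‖ ^ (2:ℕ) from by
        rw [← Real.rpow_natCast ‖f n‖ 2]; norm_num,
      ENNReal.ofReal_pow (norm_nonneg _)]
  calc ∑' n : ℕ+, (ENNReal.ofReal ‖f n‖)^2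
      = ∑' n : ℕ+, ENNReal.ofReal (‖f n‖ ^ (2:ℝ)) := tsum_congr (fun n => (h3 n).symm)
    _ = ENNReal.ofReal (∑' n : ℕ+, ‖f n‖ ^ (2:ℝ)) := h2.symm
    _ = ENNReal.ofReal (‖f‖ ^ (2:ℝ)) := by rw [h1]
    _ = ENNReal.ofReal (‖f‖^2) := by
        rw [show ‖f‖ ^ (2:ℝ) = ‖f‖ ^ (2:ℕ) from by
          rw [← Real.rpow_natCast ‖f‖ 2]; norm_num]



lemma norm_sub_apply_le (hα : 0 < α)
    (K Kinf : lp (fun _ : ℕ+ => ℂ) 2 →L[ℂ] lp (fun _ : ℕ+ => ℂ) 2)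
    (hK : IsKop α K) (hKinf : ∀ u : lp (fun _ : ℕ+ => ℂ) 2, ∀ n : ℕ+,
      Kinf u n = u n / (n : ℂ))
    (u : lp (fun _ : ℕ+ => ℂ) 2) :
    ‖(K - Kinf) u‖ ≤ (2/α) * ‖u‖ := by
  classical
  set f := (K - Kinf) u with hf
  set A : ℕ+ → ℕ+ → ℝ≥0∞ := fun n m => ENNReal.ofReal (ker α n m) with hA
  set Uq : ℕ+ → ℝ≥0∞ := fun m => ENNReal.ofReal ‖u m‖ with hUq
  set w : ℕ+ → ℝ := fun m => (m:ℝ) ^ (-(1/2):ℝ) with hwdef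
  have hw : ∀ m, 0 < w m := fun m => by
    have := pnat_cast_pos m; positivity
  have hsym : ∀ n m, A n m = A m n := fun n m => by rw [hA]; simp only; rw [ker_symm]
  have hrs : ∀ n, Summable (fun m : ℕ+ => ker α n m * w m) := by
    intro n
    apply Summable.of_nonneg_of_le (fun m => mul_nonneg (ker_nonneg α n m) (hw m).le)
      (fun m => mul_le_mul_of_nonneg_right (ker_le_kmat α n m) (hw m).le)
    exact summable_row hα n (fun m => (hw m).le) (fun m => le_rfl)
  have hCα : (0:ℝ) ≤ 2/α := by positivity
  have hrow : ∀ n, ∑' m, A n m * ENNReal.ofReal (w m)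
      ≤ ENNReal.ofReal (2/α) * ENNReal.ofReal (w n) := by
    intro n
    have e1 : ∀ m, A n m * ENNReal.ofReal (w m) = ENNReal.ofReal (ker α n m * w m) :=
      fun m => (ENNReal.ofReal_mul (ker_nonneg α n m)).symm
    rw [tsum_congr e1,
      ← ENNReal.ofReal_tsum_of_nonneg (fun m => mul_nonneg (ker_nonneg α n m) (hw m).le) (hrs n),
      ← ENNReal.ofReal_mul hCα]
    exact ENNReal.ofReal_le_ofReal (row_bound hα n)
  have hS := schur A w (ENNReal.ofReal (2/α)) hw hsym hrow Uq
  have hfn : ∀ n, ENNReal.ofReal ‖f n‖ ≤ ∑' m, A n m * Uq m := by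
    intro n
    have hsr : Summable fun m : ℕ+ => ker α n m * ‖u m‖ := by
      apply Summable.of_nonneg_of_le (fun m => mul_nonneg (ker_nonneg α n m) (norm_nonneg _))
        (fun m => mul_le_mul_of_nonneg_right (ker_le_kmat α n m) (norm_nonneg _))
      exact summable_kmat_mul hα n u
    have hsrn : Summable fun m : ℕ+ => ‖(ker α n m : ℂ) * u m‖ := by
      refine hsr.congr fun m => ?_
      rw [norm_mul, Complex.norm_real, Real.norm_of_nonneg (ker_nonneg α n m)]
    have h0 : ‖f n‖ ≤ ∑' m : ℕ+, ker α n m * ‖u m‖ := by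
      rw [hf, sub_apply hα K Kinf hK hKinf u n]
      refine (norm_tsum_le_tsum_norm hsrn).trans_eq ?_
      refine tsum_congr fun m => ?_
      rw [norm_mul, Complex.norm_real, Real.norm_of_nonneg (ker_nonneg α n m)]
    calc ENNReal.ofReal ‖f n‖ ≤ ENNReal.ofReal (∑' m : ℕ+, ker α n m * ‖u m‖) :=
          ENNReal.ofReal_le_ofReal h0
      _ = ∑' m : ℕ+, ENNReal.ofReal (ker α n m * ‖u m‖) :=
          ENNReal.ofReal_tsum_of_nonneg
            (fun m => mul_nonneg (ker_nonneg α n m) (norm_nonneg _)) hsr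
      _ = ∑' m : ℕ+, A n m * Uq m := by
          refine tsum_congr fun m => ENNReal.ofReal_mul (ker_nonneg α n m)
  have main : ENNReal.ofReal (‖f‖^2)
      ≤ ENNReal.ofReal ((2/α)^2 * ‖u‖^2) := by
    calc ENNReal.ofReal (‖f‖^2) = ∑' n : ℕ+, (ENNReal.ofReal ‖f n‖)^2 :=
          (tsum_sq_ofReal_norm f).symm
      _ ≤ ∑' n : ℕ+, (∑' m, A n m * Uq m)^2 := by
          refine ENNReal.tsum_le_tsum fun n => ?_
          gcongr
          exact hfn n
      _ ≤ (ENNReal.ofReal (2/α))^2 * ∑' m : ℕ+, (Uq m)^2 := hS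
      _ = (ENNReal.ofReal (2/α))^2 * ENNReal.ofReal (‖u‖^2) := by
          rw [tsum_sq_ofReal_norm u]
      _ = ENNReal.ofReal ((2/α)^2 * ‖u‖^2) := by
          rw [← ENNReal.ofReal_pow hCα, ← ENNReal.ofReal_mul (by positivity)]
  rw [ENNReal.ofReal_le_ofReal_iff (by positivity)] at main
  have main2 : ‖f‖^2 ≤ ((2/α) * ‖u‖)^2 := by rw [mul_pow]; exact main
  nlinarith [norm_nonneg f, norm_nonneg u, hCα, mul_nonneg hCα (norm_nonneg u)]



section lower

/-- real test vector coefficients -/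
noncomputable def fr (N : ℕ) (m : ℕ+) : ℝ :=
  if (m:ℕ) ≤ N then (m:ℝ) ^ (-(1/2):ℝ) else 0

noncomputable def frC (N : ℕ) (m : ℕ+) : ℂ := ((fr N m : ℝ) : ℂ)

def SN (N : ℕ) : Finset ℕ+ := (Finset.range N).image Nat.succPNat

lemma mem_SN {N : ℕ} {m : ℕ+} : m ∈ SN N ↔ (m:ℕ) ≤ N := by
  constructor
  · rintro hm
    rw [SN, Finset.mem_image] at hm
    obtain ⟨j, hj, rfl⟩ := hm
    rw [Finset.mem_range] at hj
    have : (j.succPNat : ℕ) = j + 1 := rfl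
    omega
  · intro h
    rw [SN, Finset.mem_image]
    refine ⟨m.natPred, ?_, PNat.succPNat_natPred m⟩
    rw [Finset.mem_range]
    have := m.pos
    have : m.natPred + 1 = (m:ℕ) := PNat.natPred_add_one m
    omega

lemma fr_nonneg (N : ℕ) (m : ℕ+) : 0 ≤ fr N m := by
  rw [fr]; split
  · positivity
  · exact le_rfl

lemma fr_eq_zero {N : ℕ} {m : ℕ+} (h : m ∉ SN N) : fr N m = 0 := by
  rw [fr, if_neg]
  intro hc
  exact h (mem_SN.2 hc)

lemma fr_eq {N : ℕ} {m : ℕ+} (h : m ∈ SN N) : fr N m = (m:ℝ) ^ (-(1/2):ℝ) :=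
  if_pos (mem_SN.1 h)


/-- the quadratic form -/
noncomputable def Qn (N : ℕ) (n : ℕ+) : ℝ := ∑ m ∈ SN N, ker α n m * fr N m

noncomputable def Qf (α : ℝ) (N : ℕ) : ℝ := ∑ n ∈ SN N, fr N n * Qn (α := α) N n

noncomputable def HN (N : ℕ) : ℝ := ∑ i ∈ range N, ((i:ℝ)+1)⁻¹

lemma succPNat_inj_on {N : ℕ} : ∀ x ∈ range N, ∀ y ∈ range N,
    Nat.succPNat x = Nat.succPNat y → x = y := by
  intro x _ y _ h
  exact Nat.succ_injective (congrArg PNat.val h)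

lemma ker_diag (α : ℝ) (n : ℕ+) : ker α n n = 0 := if_pos rfl

/-- lower bound for the quadratic form -/
lemma Qf_ge (hα : 0 < α) (N : ℕ) :
    (2/α) * HN N - 2 * ((∑' j:ℕ, ((j:ℝ)+1) ^ (-(α+1)) / α) + ∑' j:ℕ, ((j:ℝ)+1) ^ (-(2:ℝ)))
      ≤ Qf α N := by
  classical
  set F : ℕ+ → ℕ+ → ℝ := fun n m => fr N n * (ker α n m * fr N m) with hF
  have hF0 : ∀ n m, 0 ≤ F n m := fun n m =>
    mul_nonneg (fr_nonneg N n) (mul_nonneg (ker_nonneg α n m) (fr_nonneg N m))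
  have hFsym : ∀ n m, F n m = F m n := by
    intro n m; rw [hF]; simp only; rw [ker_symm]; ring
  have hQf : Qf α N = ∑ n ∈ SN N, ∑ m ∈ SN N, F n m := by
    rw [Qf]
    refine Finset.sum_congr rfl fun n _ => ?_
    rw [Qn, Finset.mul_sum]
  -- split into strict triangles
  set P : ℝ := ∑ n ∈ SN N, ∑ m ∈ SN N, (if m < n then F n m else 0) with hP
  have htri : 2 * P ≤ Qf α N := by
    have hpt : ∀ n m : ℕ+, (if m < n then F n m else 0) + (if n < m then F n m else 0)
        ≤ F n m := by
      intro n m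
      rcases lt_trichotomy m n with h | h | h
      · rw [if_pos h, if_neg (asymm h)]; simp
      · subst h
        simpa [lt_irrefl] using hF0 m m
      · rw [if_neg (asymm h), if_pos h]; simp
    have hswap : ∑ n ∈ SN N, ∑ m ∈ SN N, (if n < m then F n m else 0) = P := by
      rw [hP, Finset.sum_comm]
      refine Finset.sum_congr rfl fun m _ => Finset.sum_congr rfl fun n _ => ?_
      rw [hFsym]
    have hsum0 : (∑ n ∈ SN N, ∑ m ∈ SN N, (if m < n then F n m else 0))
        + (∑ n ∈ SN N, ∑ m ∈ SN N, (if n < m then F n m else 0)) ≤ Qf α N := by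
      rw [hQf, ← Finset.sum_add_distrib]
      refine Finset.sum_le_sum fun n _ => ?_
      rw [← Finset.sum_add_distrib]
      exact Finset.sum_le_sum fun m _ => hpt n m
    rw [hswap, ← hP] at hsum0
    linarith
  -- rewrite P over ℕ
  have hPnat : P = ∑ i ∈ range N, ((i:ℝ)+1) ^ (-(α+1))
      * ∑ j ∈ range i, ((j:ℝ)+1) ^ (α-1) := by
    rw [hP, SN, Finset.sum_image succPNat_inj_on]
    refine Finset.sum_congr rfl fun i hi => ?_
    rw [Finset.sum_image succPNat_inj_on]
    have hiN : i + 1 ≤ N := by rw [Finset.mem_range] at hi; omega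
    have hstep : ∀ j ∈ range N, (if Nat.succPNat j < Nat.succPNat i
        then F i.succPNat j.succPNat else 0)
        = (if j < i then ((i:ℝ)+1) ^ (-(α+1)) * ((j:ℝ)+1) ^ (α-1) else 0) := by
      intro j hj
      simp only [Nat.succPNat_lt_succPNat]
      split
      · next hlt =>
        have hmlt : (j.succPNat : ℕ+) < i.succPNat := Nat.succPNat_lt_succPNat.2 hlt
        have hin : (i.succPNat : ℕ+) ∈ SN N := by
          rw [mem_SN]; show i + 1 ≤ N; omega
        have hjn : (j.succPNat : ℕ+) ∈ SN N := by
          rw [mem_SN]; show j + 1 ≤ N; omega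
        rw [hF]
        simp only
        rw [fr_eq hin, fr_eq hjn, ker_lt hα hmlt, succPNat_cast, succPNat_cast]
        rw [show ∀ a b c d : ℝ, a * (b * c * d) = (a * c) * (b * d) from fun a b c d => by ring]
        rw [← Real.rpow_add (by positivity), ← Real.rpow_add (by positivity),
          show -(1/2:ℝ) + -(α + 1/2) = -(α+1) by ring,
          show α - 1/2 + -(1/2:ℝ) = α - 1 by ring]
      · rfl
    rw [Finset.sum_congr rfl hstep, Finset.sum_ite, Finset.sum_const_zero, add_zero,
      Finset.mul_sum]
    have hfilter : (range N).filter (· < i) = range i := by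
      ext j
      simp only [Finset.mem_filter, Finset.mem_range]
      omega
    rw [hfilter]
  -- estimate P from below
  have hterm : ∀ i ∈ range N,
      ((i:ℝ)+1)⁻¹ / α - ((i:ℝ)+1) ^ (-(α+1)) / α - ((i:ℝ)+1) ^ (-(2:ℝ))
      ≤ ((i:ℝ)+1) ^ (-(α+1)) * ∑ j ∈ range i, ((j:ℝ)+1) ^ (α-1) := by
    intro i _
    have hpos : (0:ℝ) < (i:ℝ)+1 := by positivity
    have h1 := mul_le_mul_of_nonneg_left (le_sum_rpow hα i) (by positivity :
      (0:ℝ) ≤ ((i:ℝ)+1) ^ (-(α+1)))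
    refine le_trans (le_of_eq ?_) h1
    have e1 : ((i:ℝ)+1) ^ (-(α+1)) * ((i:ℝ)+1) ^ α = ((i:ℝ)+1)⁻¹ := by
      rw [← Real.rpow_add hpos, show -(α+1) + α = -1 by ring, Real.rpow_neg_one]
    have e2 : ((i:ℝ)+1) ^ (-(α+1)) * ((i:ℝ)+1) ^ (α-1) = ((i:ℝ)+1) ^ (-(2:ℝ)) := by
      rw [← Real.rpow_add hpos, show -(α+1) + (α-1) = -(2:ℝ) by ring]
    rw [mul_sub, mul_sub, ← e1, ← e2]
    ring
  have hDsum1 : Summable (fun j : ℕ => ((j:ℝ)+1) ^ (-(α+1)) / α) :=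
    (summable_rpow_shift (-(α+1)) (by linarith)).div_const α
  have hDsum2 : Summable (fun j : ℕ => ((j:ℝ)+1) ^ (-(2:ℝ))) :=
    summable_rpow_shift (-(2:ℝ)) (by norm_num)
  have hD1 : ∑ i ∈ range N, ((i:ℝ)+1) ^ (-(α+1)) / α
      ≤ ∑' j:ℕ, ((j:ℝ)+1) ^ (-(α+1)) / α :=
    hDsum1.sum_le_tsum (range N) (fun j _ => by positivity)
  have hD2 : ∑ i ∈ range N, ((i:ℝ)+1) ^ (-(2:ℝ)) ≤ ∑' j:ℕ, ((j:ℝ)+1) ^ (-(2:ℝ)) :=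
    hDsum2.sum_le_tsum (range N) (fun j _ => by positivity)
  have hPge : HN N / α - (∑' j:ℕ, ((j:ℝ)+1) ^ (-(α+1)) / α)
      - (∑' j:ℕ, ((j:ℝ)+1) ^ (-(2:ℝ))) ≤ P := by
    rw [hPnat]
    have := Finset.sum_le_sum hterm
    rw [Finset.sum_sub_distrib, Finset.sum_sub_distrib] at this
    have hHN : ∑ i ∈ range N, ((i:ℝ)+1)⁻¹ / α = HN N / α := by
      rw [HN, Finset.sum_div]
    rw [hHN] at this
    linarith
  have hr : 2/α * HN N = 2*(HN N/α) := by ring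
  linarith

end lower


lemma memℓp_frC (N : ℕ) : Memℓp (frC N) 2 := by
  apply memℓp_gen
  apply summable_of_ne_finset_zero (s := SN N)
  intro m hm
  rw [frC, fr_eq_zero hm]
  simp only [Complex.ofReal_zero, norm_zero]
  rw [Real.zero_rpow (by norm_num : (2:ℝ≥0∞).toReal ≠ 0)]

noncomputable def Uvec (N : ℕ) : lp (fun _ : ℕ+ => ℂ) 2 := ⟨frC N, memℓp_frC N⟩

lemma Uvec_apply (N : ℕ) (m : ℕ+) : (Uvec N) m = frC N m := rfl

lemma norm_sq_frC {N : ℕ} (m : ℕ+) : ‖frC N m‖ ^ (2:ℝ) = fr N m ^ (2:ℕ) := by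
  rw [frC, Complex.norm_real, Real.norm_of_nonneg (fr_nonneg N m),
    ← Real.rpow_natCast (fr N m) 2]
  norm_num

lemma Uvec_norm_sq (N : ℕ) : ‖Uvec N‖ ^ (2:ℕ) = HN N := by
  have hp : (0:ℝ) < (2:ℝ≥0∞).toReal := by norm_num
  have h1 : ‖Uvec N‖ ^ (2:ℝ≥0∞).toReal = ∑' m : ℕ+, ‖(Uvec N) m‖ ^ (2:ℝ≥0∞).toReal :=
    lp.norm_rpow_eq_tsum hp (Uvec N)
  rw [show ((2:ℝ≥0∞).toReal) = (2:ℝ) by norm_num] at h1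
  have h2 : ∑' m : ℕ+, ‖(Uvec N) m‖ ^ (2:ℝ) = ∑ m ∈ SN N, ‖(Uvec N) m‖ ^ (2:ℝ) := by
    apply tsum_eq_sum
    intro m hm
    rw [Uvec_apply, frC, fr_eq_zero hm]
    simp only [Complex.ofReal_zero, norm_zero]
    exact Real.zero_rpow (by norm_num)
  have h3 : ∑ m ∈ SN N, ‖(Uvec N) m‖ ^ (2:ℝ) = HN N := by
    rw [SN, Finset.sum_image succPNat_inj_on, HN]
    refine Finset.sum_congr rfl fun j hj => ?_
    have hjN : (j.succPNat : ℕ+) ∈ SN N := by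
      rw [mem_SN]
      show j + 1 ≤ N
      rw [Finset.mem_range] at hj; omega
    rw [Uvec_apply, norm_sq_frC, fr_eq hjN, ← Real.rpow_natCast _ 2,
      ← Real.rpow_mul (by positivity), succPNat_cast]
    norm_num
    exact Real.rpow_neg_one _
  have h4 : ‖Uvec N‖ ^ (2:ℝ) = ‖Uvec N‖ ^ (2:ℕ) := by
    rw [← Real.rpow_natCast ‖Uvec N‖ 2]; norm_num
  rw [← h4, h1, h2, h3]

lemma TU_apply (hα : 0 < α)
    (K Kinf : lp (fun _ : ℕ+ => ℂ) 2 →L[ℂ] lp (fun _ : ℕ+ => ℂ) 2)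
    (hK : IsKop α K) (hKinf : ∀ u : lp (fun _ : ℕ+ => ℂ) 2, ∀ n : ℕ+,
      Kinf u n = u n / (n : ℂ)) (N : ℕ) (n : ℕ+) :
    (K - Kinf) (Uvec N) n = ((Qn (α := α) N n : ℝ) : ℂ) := by
  rw [sub_apply hα K Kinf hK hKinf (Uvec N) n]
  have h1 : ∑' m : ℕ+, (ker α n m : ℂ) * (Uvec N) m
      = ∑ m ∈ SN N, (ker α n m : ℂ) * (Uvec N) m := by
    apply tsum_eq_sum
    intro m hm
    rw [Uvec_apply, frC, fr_eq_zero hm, Complex.ofReal_zero, mul_zero]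
  rw [h1, Qn, Complex.ofReal_sum]
  refine Finset.sum_congr rfl fun m _ => ?_
  rw [Uvec_apply, frC, Complex.ofReal_mul]

lemma inner_TU (hα : 0 < α)
    (K Kinf : lp (fun _ : ℕ+ => ℂ) 2 →L[ℂ] lp (fun _ : ℕ+ => ℂ) 2)
    (hK : IsKop α K) (hKinf : ∀ u : lp (fun _ : ℕ+ => ℂ) 2, ∀ n : ℕ+,
      Kinf u n = u n / (n : ℂ)) (N : ℕ) :
    inner ℂ (Uvec N) ((K - Kinf) (Uvec N)) = ((Qf α N : ℝ) : ℂ) := by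
  rw [lp.inner_eq_tsum]
  have h1 : ∀ n : ℕ+, inner ℂ ((Uvec N) n) (((K - Kinf) (Uvec N)) n)
      = ((fr N n * Qn (α := α) N n : ℝ) : ℂ) := by
    intro n
    rw [RCLike.inner_apply', TU_apply hα K Kinf hK hKinf N n, Uvec_apply, frC,
      Complex.conj_ofReal, Complex.ofReal_mul]
  rw [tsum_congr h1]
  have h2 : ∑' n : ℕ+, ((fr N n * Qn (α := α) N n : ℝ) : ℂ)
      = ∑ n ∈ SN N, ((fr N n * Qn (α := α) N n : ℝ) : ℂ) := by
    apply tsum_eq_sum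
    intro n hn
    rw [fr_eq_zero hn, Complex.ofReal_mul, Complex.ofReal_zero, zero_mul]
  rw [h2, Qf, Complex.ofReal_sum]

lemma Qf_le (hα : 0 < α)
    (K Kinf : lp (fun _ : ℕ+ => ℂ) 2 →L[ℂ] lp (fun _ : ℕ+ => ℂ) 2)
    (hK : IsKop α K) (hKinf : ∀ u : lp (fun _ : ℕ+ => ℂ) 2, ∀ n : ℕ+,
      Kinf u n = u n / (n : ℂ)) (N : ℕ) :
    Qf α N ≤ ‖K - Kinf‖ * HN N := by
  have h1 : Qf α N ≤ ‖((Qf α N : ℝ) : ℂ)‖ := by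
    rw [Complex.norm_real]
    exact le_abs_self _
  have h2 : ‖(inner ℂ (Uvec N) ((K - Kinf) (Uvec N)) : ℂ)‖
      ≤ ‖Uvec N‖ * ‖(K - Kinf) (Uvec N)‖ := norm_inner_le_norm _ _
  have h3 : ‖(K - Kinf) (Uvec N)‖ ≤ ‖K - Kinf‖ * ‖Uvec N‖ :=
    (K - Kinf).le_opNorm (Uvec N)
  have h4 := Uvec_norm_sq N
  calc Qf α N ≤ ‖((Qf α N : ℝ) : ℂ)‖ := h1
    _ = ‖(inner ℂ (Uvec N) ((K - Kinf) (Uvec N)) : ℂ)‖ := by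
        rw [inner_TU hα K Kinf hK hKinf N]
    _ ≤ ‖Uvec N‖ * ‖(K - Kinf) (Uvec N)‖ := h2
    _ ≤ ‖Uvec N‖ * (‖K - Kinf‖ * ‖Uvec N‖) :=
        mul_le_mul_of_nonneg_left h3 (norm_nonneg _)
    _ = ‖K - Kinf‖ * (‖Uvec N‖ ^ (2:ℕ)) := by ring
    _ = ‖K - Kinf‖ * HN N := by rw [h4]


end HardyAux

/-- The operator norm of `K_α - K_∞` equals `2/α`, where `K_∞` is the diagonal operator
with entries `1/n`. -/
theorem norm_Kalpha_sub_diag (α : ℝ) (hα : 0 < α)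
    (K Kinf : lp (fun _ : ℕ+ => ℂ) 2 →L[ℂ] lp (fun _ : ℕ+ => ℂ) 2)
    (hK : IsKop α K) (hKinf : ∀ u : lp (fun _ : ℕ+ => ℂ) 2, ∀ n : ℕ+,
      Kinf u n = u n / (n : ℂ)) :
    ‖K - Kinf‖ = 2 / α := by
  have hub : ‖K - Kinf‖ ≤ 2 / α :=
    ContinuousLinearMap.opNorm_le_bound _ (by positivity)
      (fun u => HardyAux.norm_sub_apply_le hα K Kinf hK hKinf u)
  have htend : Filter.Tendsto (fun N => HardyAux.HN N) Filter.atTop Filter.atTop := by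
    refine Real.tendsto_sum_range_one_div_nat_succ_atTop.congr fun N => ?_
    exact Finset.sum_congr rfl fun i _ => (one_div _)
  have hlb : 2 / α ≤ ‖K - Kinf‖ := by
    by_contra hcon
    push_neg at hcon
    set D : ℝ := (∑' j:ℕ, ((j:ℝ)+1) ^ (-(α+1)) / α) + ∑' j:ℕ, ((j:ℝ)+1) ^ (-(2:ℝ)) with hD
    set δ : ℝ := 2/α - ‖K - Kinf‖ with hδdef
    have hδ : 0 < δ := by rw [hδdef]; linarith
    have hbound : ∀ N : ℕ, δ * HardyAux.HN N ≤ 2 * D := by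
      intro N
      have h1 := HardyAux.Qf_ge hα N
      have h2 := HardyAux.Qf_le hα K Kinf hK hKinf N
      have h3 : δ * HardyAux.HN N
          = 2/α * HardyAux.HN N - ‖K - Kinf‖ * HardyAux.HN N := by
        rw [hδdef]; ring
      rw [h3]
      rw [hD]
      linarith
    obtain ⟨N, hNbig⟩ := (htend.eventually_ge_atTop ((2*D)/δ + 1)).exists
    have h4 := mul_le_mul_of_nonneg_left hNbig hδ.le
    have h5 : δ * ((2*D)/δ + 1) = 2*D + δ := by
      rw [mul_add, mul_one, mul_div_cancel₀ _ hδ.ne']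
    have h6 := hbound N
    rw [h5] at h4
    linarith
  exact le_antisymm hub hlb
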